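/- Let D ⊆ ℂ be an open disc centered at 0 and let f be meromorphic on D, not identically zero, odd (f(−z) = −f(z) wherever defined), and suppose that f(u)f(u+v) − f(v)f(u) + f(u+v)f(v) = 0 for all u, v ∈ ℂ such that u, v, u+v ∈ D and f is analytic at u, v and u+v. Then there is a constant C ≠ 0 such that f(z) = C/z for all z ∈ D ∖ {0} at which f is analytic. -/

import Mathlib

/-!
STATEMENT 3: The only odd, not identically zero, meromorphic solutions of
`f(u)f(u+v) − f(v)f(u) + f(u+v)f(v) = 0` on a disc around `0` are
`f(z) = C/z` with `C ≠ 0` (the Sₙ-invariant `A_{n−1}` case, `n ≥ 3`).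
-/

open Metric Filter Topology Set

private lemma mero_dichotomy {f : ℂ → ℂ} {x : ℂ} (hf : MeromorphicAt f x) :
    (∀ᶠ z in 𝓝[≠] x, f z = 0) ∨ (∀ᶠ z in 𝓝[≠] x, f z ≠ 0) := by
  obtain ⟨n, h⟩ := hf
  rcases h.eventually_eq_zero_or_eventually_ne_zero with h0 | h1
  · left
    filter_upwards [h0.filter_mono nhdsWithin_le_nhds, self_mem_nhdsWithin] with z hz hne
    have hp : (z - x) ^ n ≠ 0 := pow_ne_zero _ (sub_ne_zero.mpr hne)
    have : (z - x) ^ n • f z = 0 := hz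
    simpa [smul_eq_mul, hp] using this
  · right
    filter_upwards [h1] with z hz h0
    exact hz (by simp [h0])

theorem a_type_invariant_solutions_are_rational
    (r : ℝ) (hr : 0 < r) (f : ℂ → ℂ)
    (hmer : MeromorphicOn f (ball (0 : ℂ) r))
    (hne : ∃ z ∈ ball (0 : ℂ) r, AnalyticAt ℂ f z ∧ f z ≠ 0)
    (hodd : ∀ z ∈ ball (0 : ℂ) r,
      AnalyticAt ℂ f z → AnalyticAt ℂ f (-z) → f (-z) = -f z)
    (hfe : ∀ u v : ℂ, u ∈ ball (0 : ℂ) r → v ∈ ball (0 : ℂ) r →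
      u + v ∈ ball (0 : ℂ) r →
      AnalyticAt ℂ f u → AnalyticAt ℂ f v → AnalyticAt ℂ f (u + v) →
      f u * f (u + v) - f v * f u + f (u + v) * f v = 0) :
    ∃ C : ℂ, C ≠ 0 ∧ ∀ z ∈ ball (0 : ℂ) r, z ≠ 0 → AnalyticAt ℂ f z →
      f z = C / z := by
  obtain ⟨z₀, hz₀b, hz₀a, hz₀n⟩ := hne
  -- `f` is eventually nonvanishing near every point of the ball
  have hnv : ∀ z ∈ ball (0 : ℂ) r, ∀ᶠ w in 𝓝[≠] z, f w ≠ 0 := by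
    set A : Set ℂ := {z | z ∈ ball (0 : ℂ) r ∧ ∀ᶠ w in 𝓝[≠] z, f w = 0} with hA
    set B : Set ℂ := {z | z ∈ ball (0 : ℂ) r ∧ ∀ᶠ w in 𝓝[≠] z, f w ≠ 0} with hB
    have hBopen : IsOpen B := by
      rw [isOpen_iff_mem_nhds]
      rintro z ⟨hzb, hz⟩
      rw [eventually_nhdsWithin_iff] at hz
      filter_upwards [isOpen_ball.eventually_mem hzb, hz.eventually_nhds] with w hwb hw
      refine ⟨hwb, ?_⟩
      rw [eventually_nhdsWithin_iff]
      rcases eq_or_ne w z with rfl | hwz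
      · exact hw
      · filter_upwards [hw, eventually_ne_nhds hwz] with y hy hyz _
        exact hy hyz
    have hAopen : IsOpen A := by
      rw [isOpen_iff_mem_nhds]
      rintro z ⟨hzb, hz⟩
      rw [eventually_nhdsWithin_iff] at hz
      filter_upwards [isOpen_ball.eventually_mem hzb, hz.eventually_nhds] with w hwb hw
      refine ⟨hwb, ?_⟩
      rw [eventually_nhdsWithin_iff]
      rcases eq_or_ne w z with rfl | hwz
      · exact hw
      · filter_upwards [hw, eventually_ne_nhds hwz] with y hy hyz _
        exact hy hyz
    have hdisj : Disjoint B A := by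
      rw [Set.disjoint_left]
      rintro z ⟨_, hz1⟩ ⟨_, hz2⟩
      obtain ⟨w, hw1, hw2⟩ := (hz1.and hz2).exists
      exact hw1 hw2
    have hcover : ball (0 : ℂ) r ⊆ B ∪ A := by
      intro z hz
      rcases mero_dichotomy (hmer z hz) with h | h
      · exact Or.inr ⟨hz, h⟩
      · exact Or.inl ⟨hz, h⟩
    have hBne : (ball (0 : ℂ) r ∩ B).Nonempty := by
      refine ⟨z₀, hz₀b, hz₀b, ?_⟩
      exact (hz₀a.continuousAt.eventually_ne hz₀n).filter_mono nhdsWithin_le_nhds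
    have hsub : ball (0 : ℂ) r ⊆ B :=
      (convex_ball (0 : ℂ) r).isPreconnected.subset_left_of_subset_union
        hBopen hAopen hdisj hcover hBne
    exact fun z hz => (hsub hz).2
  -- The good set V
  set V : Set ℂ := {z | z ∈ ball (0 : ℂ) r ∧ AnalyticAt ℂ f z ∧ f z ≠ 0} with hV
  have hVball : ∀ z ∈ V, z ∈ ball (0 : ℂ) r := fun z hz => hz.1
  have hVopen : IsOpen V := by
    rw [isOpen_iff_mem_nhds]
    rintro z ⟨hzb, hza, hzn⟩
    filter_upwards [isOpen_ball.eventually_mem hzb, hza.eventually_analyticAt,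
      hza.continuousAt.eventually_ne hzn] with w h1 h2 h3
    exact ⟨h1, h2, h3⟩
  have hstar : ∀ z ∈ ball (0 : ℂ) r, ∀ᶠ w in 𝓝[≠] z, w ∈ V := by
    intro z hz
    filter_upwards [(isOpen_ball.eventually_mem hz).filter_mono nhdsWithin_le_nhds,
      (hmer z hz).eventually_analyticAt, hnv z hz] with w h1 h2 h3
    exact ⟨h1, h2, h3⟩
  have hz₀V : z₀ ∈ V := ⟨hz₀b, hz₀a, hz₀n⟩
  -- the reciprocal g
  set g : ℂ → ℂ := fun z => (f z)⁻¹ with hg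
  have hgd : ∀ z ∈ V, DifferentiableAt ℂ g z := fun z hz =>
    (hz.2.1.inv hz.2.2).differentiableAt
  -- additivity of g
  have hadd : ∀ u v : ℂ, u ∈ V → v ∈ V → u + v ∈ V → g (u + v) = g u + g v := by
    intro u v hu hv huv
    have h := hfe u v hu.1 hv.1 huv.1 hu.2.1 hv.2.1 huv.2.1
    have h1 : f u ≠ 0 := hu.2.2
    have h2 : f v ≠ 0 := hv.2.2
    have h3 : f (u + v) ≠ 0 := huv.2.2
    show (f (u + v))⁻¹ = (f u)⁻¹ + (f v)⁻¹
    field_simp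
    linear_combination -h
  -- the derivative of g is "translation invariant"
  have hderiv : ∀ u v : ℂ, u ∈ V → v ∈ V → u + v ∈ V →
      deriv g (u + v) = deriv g u := by
    intro u v hu hv huv
    have hloc : (fun w => g (w + v)) =ᶠ[𝓝 u] fun w => g w + g v := by
      have hc : ContinuousAt (fun w : ℂ => w + v) u := by fun_prop
      filter_upwards [hVopen.eventually_mem hu,
        hc.eventually_mem (hVopen.mem_nhds huv)] with w h1 h2
      exact hadd w v h1 hv h2
    have h1 : deriv (fun w => g (w + v)) u = deriv (fun w => g w + g v) u :=
      hloc.deriv_eq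
    rwa [deriv_comp_add_const, deriv_add_const] at h1
  have hconstpair : ∀ u v : ℂ, u ∈ V → v ∈ V → u + v ∈ V →
      deriv g u = deriv g v := by
    intro u v hu hv huv
    have h1 := hderiv u v hu hv huv
    have h2 := hderiv v u hv hu (by rwa [add_comm v u])
    rw [← h1, add_comm u v, h2]
  -- the derivative is globally constant on V
  set lam : ℂ := deriv g z₀ with hlamdef
  have hlam : ∀ u ∈ V, deriv g u = lam := by
    intro u hu
    have hv : ∀ᶠ v in 𝓝[≠] (0 : ℂ), v ∈ V ∧ u + v ∈ V ∧ z₀ + v ∈ V := by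
      have e1 := hstar 0 (mem_ball_self hr)
      have e2 : ∀ᶠ v in 𝓝 (0 : ℂ), u + v ∈ V :=
        ((continuous_add_left u).continuousAt).eventually_mem
          (by simpa using hVopen.mem_nhds hu)
      have e3 : ∀ᶠ v in 𝓝 (0 : ℂ), z₀ + v ∈ V :=
        ((continuous_add_left z₀).continuousAt).eventually_mem
          (by simpa using hVopen.mem_nhds hz₀V)
      filter_upwards [e1, e2.filter_mono nhdsWithin_le_nhds,
        e3.filter_mono nhdsWithin_le_nhds] with v h1 h2 h3
      exact ⟨h1, h2, h3⟩
    obtain ⟨v, hvV, huvV, hz₀vV⟩ := hv.exists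
    calc deriv g u = deriv g v := hconstpair u v hu hvV huvV
    _ = deriv g z₀ := (hconstpair z₀ v hz₀V hvV hz₀vV).symm
  -- the auxiliary function h = g - lam * id
  set h : ℂ → ℂ := fun z => g z - lam * z with hh
  have haddh : ∀ u v : ℂ, u ∈ V → v ∈ V → u + v ∈ V → h (u + v) = h u + h v := by
    intro u v hu hv huv
    simp only [hh]
    rw [hadd u v hu hv huv]
    ring
  have hderivh : ∀ u ∈ V, deriv h u = 0 := by
    intro u hu
    have hd1 : DifferentiableAt ℂ (fun z : ℂ => lam * z) u :=
      (differentiable_id.const_mul lam).differentiableAt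
    rw [hh]
    rw [deriv_fun_sub (hgd u hu) hd1, hlam u hu]
    have hd2 : deriv (fun z : ℂ => lam * z) u = lam := by
      have := deriv_const_mul_field (v := fun z : ℂ => z) (x := u) lam
      simpa using this
    rw [hd2, sub_self]
  have hdiffh : ∀ u ∈ V, DifferentiableAt ℂ h u := by
    intro u hu
    exact (hgd u hu).sub ((differentiable_id.const_mul lam).differentiableAt)
  -- h is constant on balls contained in V
  have hconstball : ∀ (c : ℂ) (ε : ℝ), ball c ε ⊆ V →
      ∀ x ∈ ball c ε, ∀ y ∈ ball c ε, h x = h y := by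
    intro c ε hsub x hx y hy
    refine (convex_ball c ε).is_const_of_fderivWithin_eq_zero (𝕜 := ℂ) ?_ ?_ hx hy
    · exact fun w hw => (hdiffh w (hsub hw)).differentiableWithinAt
    · intro w hw
      rw [fderivWithin_of_isOpen isOpen_ball hw, ← toSpanSingleton_deriv, hderivh w (hsub hw)]
      ext t
      simp
  -- Step A: h vanishes near 0
  obtain ⟨ε₁, hε₁pos, hε₁sub⟩ := Metric.isOpen_iff.mp hVopen z₀ hz₀V
  set ε₀ : ℝ := min ε₁ r with hε₀def
  have hε₀pos : 0 < ε₀ := lt_min hε₁pos hr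
  have hε₀r : ε₀ ≤ r := min_le_right _ _
  have hA : ∀ v ∈ V, ‖v‖ < ε₀ → h v = 0 := by
    intro v hv hvs
    have hz₀v : z₀ + v ∈ ball z₀ ε₁ := by
      rw [mem_ball, dist_eq_norm]
      calc ‖z₀ + v - z₀‖ = ‖v‖ := by ring_nf
      _ < ε₀ := hvs
      _ ≤ ε₁ := min_le_left _ _
    have h1 : h (z₀ + v) = h z₀ + h v := haddh z₀ v hz₀V hv (hε₁sub hz₀v)
    have h2 : h (z₀ + v) = h z₀ :=
      hconstball z₀ ε₁ hε₁sub _ hz₀v _ (mem_ball_self hε₁pos)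
    rw [h2, left_eq_add] at h1
    exact h1
  -- Step B: induction outward
  have hB : ∀ n : ℕ, ∀ z ∈ V, ‖z‖ < n * (ε₀ / 2) → h z = 0 := by
    intro n
    induction n with
    | zero =>
      intro z _ hzlt
      exact absurd hzlt (by simpa using norm_nonneg z)
    | succ n ih =>
      intro z hz hzlt
      by_cases hsmall : ‖z‖ < ε₀
      · exact hA z hz hsmall
      push_neg at hsmall
      have hznorm : (0 : ℝ) < ‖z‖ := lt_of_lt_of_le hε₀pos hsmall
      set a : ℝ := ε₀ / (2 * ‖z‖) with ha
      have hapos : 0 < a := div_pos hε₀pos (by positivity)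
      have hale : a ≤ 1 / 2 := by
        rw [ha, div_le_div_iff₀ (by positivity) (by norm_num)]
        nlinarith
      set v₀ : ℂ := (a : ℂ) * z with hv₀
      set w₀ : ℂ := z - v₀ with hw₀
      have hv₀norm : ‖v₀‖ = ε₀ / 2 := by
        have hzne : ‖z‖ ≠ 0 := ne_of_gt hznorm
        rw [hv₀, norm_mul, Complex.norm_real, Real.norm_of_nonneg hapos.le, ha,
          div_mul_eq_mul_div, div_eq_div_iff (mul_ne_zero two_ne_zero hzne) two_ne_zero]
        ring
      have hw₀eq : w₀ = ((1 - a : ℝ) : ℂ) * z := by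
        rw [hw₀, hv₀]
        push_cast
        ring
      have hw₀norm : ‖w₀‖ = ‖z‖ - ε₀ / 2 := by
        rw [hw₀eq, norm_mul, Complex.norm_real,
          Real.norm_of_nonneg (by linarith : (0:ℝ) ≤ 1 - a)]
        have hzne : ‖z‖ ≠ 0 := ne_of_gt hznorm
        have : a * ‖z‖ = ε₀ / 2 := by
          rw [ha, div_mul_eq_mul_div, div_eq_div_iff (mul_ne_zero two_ne_zero hzne) two_ne_zero]
          ring
        nlinarith
      have hzr : ‖z‖ < r := by
        have := hVball z hz
        rwa [mem_ball, dist_zero_right] at this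
      have hv₀ball : v₀ ∈ ball (0 : ℂ) r := by
        rw [mem_ball, dist_zero_right, hv₀norm]; linarith
      have hw₀ball : w₀ ∈ ball (0 : ℂ) r := by
        rw [mem_ball, dist_zero_right, hw₀norm]; linarith
      have e1 : ∀ᶠ v in 𝓝[≠] v₀, v ∈ V := hstar v₀ hv₀ball
      have e2 : ∀ᶠ v in 𝓝[≠] v₀, z - v ∈ V := by
        have ht : Tendsto (fun v : ℂ => z - v) (𝓝[≠] v₀) (𝓝[≠] w₀) := by
          rw [tendsto_nhdsWithin_iff]
          constructor
          · have hc : Continuous (fun v : ℂ => z - v) := by fun_prop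
            exact (hc.tendsto v₀).mono_left nhdsWithin_le_nhds
          · filter_upwards [self_mem_nhdsWithin] with v hv
            simp only [Set.mem_compl_iff, Set.mem_singleton_iff] at hv ⊢
            intro hcon
            apply hv
            have : z - v = z - v₀ := hcon
            linear_combination -this
        exact ht.eventually (hstar w₀ hw₀ball)
      have e3 : ∀ᶠ v in 𝓝[≠] v₀, ‖v‖ < ε₀ := by
        have : v₀ ∈ ball (0 : ℂ) ε₀ := by
          rw [mem_ball, dist_zero_right, hv₀norm]; linarith
        filter_upwards [(isOpen_ball.eventually_mem this).filter_mono
          nhdsWithin_le_nhds] with v hv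
        rwa [mem_ball, dist_zero_right] at hv
      have e4 : ∀ᶠ v in 𝓝[≠] v₀, ‖z - v‖ < n * (ε₀ / 2) := by
        have hmem : w₀ ∈ ball (0 : ℂ) (n * (ε₀ / 2)) := by
          rw [mem_ball, dist_zero_right, hw₀norm]
          have : (n : ℝ) * (ε₀ / 2) = (n + 1) * (ε₀ / 2) - ε₀ / 2 := by ring
          rw [this]
          have : ((n : ℝ) + 1) * (ε₀ / 2) = ((n + 1 : ℕ) : ℝ) * (ε₀ / 2) := by push_cast; ring
          linarith [hzlt, this ▸ hzlt]
        have hc : ContinuousAt (fun v : ℂ => z - v) v₀ := by fun_prop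
        have := hc.eventually_mem (isOpen_ball.mem_nhds hmem)
        filter_upwards [this.filter_mono nhdsWithin_le_nhds] with v hv
        rwa [mem_ball, dist_zero_right] at hv
      obtain ⟨v, hvV, hzvV, hvlt, hzvlt⟩ := (e1.and (e2.and (e3.and e4))).exists
      have h1 : h (z - v + v) = h (z - v) + h v :=
        haddh (z - v) v hzvV hvV (by simpa using hz)
      rw [sub_add_cancel] at h1
      rw [ih (z - v) hzvV hzvlt, hA v hvV hvlt, add_zero] at h1
      exact h1
  -- conclude: g z = lam * z on V
  have hglin : ∀ z ∈ V, g z = lam * z := by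
    intro z hz
    obtain ⟨n, hn⟩ := exists_nat_ge (r / (ε₀ / 2))
    have hzr : ‖z‖ < r := by
      have := hVball z hz; rwa [mem_ball, dist_zero_right] at this
    have hzn : ‖z‖ < n * (ε₀ / 2) := by
      have : r ≤ n * (ε₀ / 2) := by
        rw [div_le_iff₀ (by positivity)] at hn
        linarith
      linarith
    have := hB n z hz hzn
    rw [hh] at this
    linear_combination this
  -- lam ≠ 0
  have hlamne : lam ≠ 0 := by
    intro hcon
    have := hglin z₀ hz₀V
    rw [hcon, zero_mul, hg] at this
    exact inv_ne_zero hz₀n this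
  refine ⟨lam⁻¹, inv_ne_zero hlamne, ?_⟩
  intro z hzb hz0 hza
  -- eventually f w = lam⁻¹ / w near z
  have hev : f =ᶠ[𝓝[≠] z] fun w => lam⁻¹ / w := by
    filter_upwards [hstar z hzb] with w hw
    have h1 : (f w)⁻¹ = lam * w := hglin w hw
    have hwne : w ≠ 0 := by
      intro hcon
      rw [hcon, mul_zero] at h1
      exact inv_ne_zero (hcon ▸ hw.2.2) h1
    have h2 : f w = (lam * w)⁻¹ := by rw [← h1, inv_inv]
    show f w = lam⁻¹ / w
    rw [h2, mul_inv, div_eq_mul_inv]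
  have t1 : Tendsto f (𝓝[≠] z) (𝓝 (f z)) :=
    hza.continuousAt.tendsto.mono_left nhdsWithin_le_nhds
  have t2 : Tendsto (fun w => lam⁻¹ / w) (𝓝[≠] z) (𝓝 (lam⁻¹ / z)) := by
    have : ContinuousAt (fun w : ℂ => lam⁻¹ / w) z :=
      continuousAt_const.div continuousAt_id hz0
    exact this.tendsto.mono_left nhdsWithin_le_nhds
  have t1' : Tendsto (fun w => lam⁻¹ / w) (𝓝[≠] z) (𝓝 (f z)) := t1.congr' hev
  exact tendsto_nhds_unique t1' t2
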